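/- Let M be a discrete skip free process such that Θ^a(M) ≐ M for a = 0 and a = 1. For an integer a ≥ 0 let σ_a = inf{n ≥ 0 : |M_n| = a} be the first exit time from (−a, a), and define Ψ^a(M)_n = Σ_{k=1}^n (1_{k ≤ σ_a} − 1_{k > σ_a}) ΔM_k. Then Ψ^a(M) ≐ M for a = 0 and a = 1. -/

import Mathlib

open MeasureTheory ProbabilityTheory Filter Finset
open scoped ENNReal NNReal

noncomputable section

/-- The quadratic variation `[s]_n` of a discrete path `s`. -/
def qv (s : ℕ → ℤ) (n : ℕ) : ℕ :=
  ∑ k ∈ Finset.range n, (s (k + 1) - s k).natAbs ^ 2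

/-- Reflection of a discrete path at level `a`:
`Θ^a(s)_n = ∑_{k=1}^n (1_{k ≤ T_a(s)} - 1_{k > T_a(s)}) (s_k - s_{k-1})`,
where `k ≤ T_a(s)` iff `s_j ≠ a` for every `j < k`. -/
def reflect (a : ℤ) (s : ℕ → ℤ) : ℕ → ℤ := fun n =>
  ∑ k ∈ Finset.range n, if ∀ j ≤ k, s j ≠ a then s (k + 1) - s k else s k - s (k + 1)

/-- A (deterministic) skip free path: starts at `0` and has increments in `{-1, 0, 1}`. -/
def SkipFreePath (s : ℕ → ℤ) : Prop :=
  s 0 = 0 ∧ ∀ n, s (n + 1) - s n = 1 ∨ s (n + 1) - s n = 0 ∨ s (n + 1) - s n = -1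

/-- The uniform law on `{-1, +1} ⊆ ℤ`. -/
def bern : Measure ℤ :=
  (2 : ℝ≥0∞)⁻¹ • Measure.dirac (1 : ℤ) + (2 : ℝ≥0∞)⁻¹ • Measure.dirac (-1 : ℤ)

/-- `S` is a symmetric Bernoulli random walk: `S_0 = 0` a.s. and the increments are
i.i.d. uniform on `{-1, +1}`. -/
def IsBernoulliRW {Ω : Type*} [MeasurableSpace Ω] (P : Measure Ω) (S : ℕ → Ω → ℤ) : Prop :=
  (∀ᵐ ω ∂P, S 0 ω = 0) ∧
    iIndepFun (fun n ω => S (n + 1) ω - S n ω) P ∧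
    ∀ n, Measure.map (fun ω => S (n + 1) ω - S n ω) P = bern

/-- `M` is a discrete Ocone local martingale: it is equal in law to a symmetric Bernoulli
random walk time changed by an independent nondecreasing `ℕ`-valued process with
increments in `{0, 1}`. -/
def IsDiscreteOcone {Ω : Type*} [MeasurableSpace Ω] (P : Measure Ω) (M : ℕ → Ω → ℤ) : Prop :=
  ∃ (Ω' : Type) (_ : MeasurableSpace Ω') (P' : Measure Ω') (S : ℕ → Ω' → ℤ) (A : ℕ → Ω' → ℕ),
    IsProbabilityMeasure P' ∧ IsBernoulliRW P' S ∧
    (∀ ω, A 0 ω = 0) ∧ (∀ ω n, A (n + 1) ω = A n ω ∨ A (n + 1) ω = A n ω + 1) ∧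
    IndepFun (fun ω => (S · ω)) (fun ω => (A · ω)) P' ∧
    Measure.map (fun ω => (fun n => M n ω)) P
      = Measure.map (fun ω => (fun n => S (A n ω) ω)) P'

/-- The successive times at which the quadratic variation of `s` increases:
`τ_0 = 0` and `τ_{n+1} = inf {k > τ_n : [s]_k = n + 1}`, with `inf ∅ = τ_n`. -/
def tauP (s : ℕ → ℤ) : ℕ → ℕ
  | 0 => 0
  | n + 1 => max (tauP s n) (sInf {k | tauP s n < k ∧ qv s k = n + 1})

/-- The time-changed path `S^s = (s_{τ_n})_n`. -/
def SM (s : ℕ → ℤ) : ℕ → ℤ := fun n => s (tauP s n)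

/-- Reflection of a discrete path at the first exit time `σ_a = inf {n : |s_n| = a}` of
the interval `(-a, a)`: `Ψ^a(s)_n = ∑_{k=1}^n (1_{k ≤ σ_a} - 1_{k > σ_a}) (s_k - s_{k-1})`,
where `k ≤ σ_a(s)` iff `|s_j| ≠ a` for every `j < k`. -/
def exitReflect (a : ℤ) (s : ℕ → ℤ) : ℕ → ℤ := fun n =>
  ∑ k ∈ Finset.range n, if ∀ j ≤ k, |s j| ≠ a then s (k + 1) - s k else s k - s (k + 1)


namespace ExitReflectAux

/-- Paths that never hit `-1` strictly before hitting `1`. -/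
def Pa : Set (ℕ → ℤ) := {s | ∀ n, s n = -1 → ∃ m < n, s m = 1}

lemma not_mem_Pa {t : ℕ → ℤ} : t ∉ Pa ↔ ∃ n, t n = -1 ∧ ∀ m < n, t m ≠ 1 := by
  simp only [Pa, Set.mem_setOf_eq]
  push_neg
  rfl

lemma measurableSet_cond (p : ℤ → Prop) (k : ℕ) :
    MeasurableSet {s : ℕ → ℤ | ∀ j ≤ k, p (s j)} := by
  have h : {s : ℕ → ℤ | ∀ j ≤ k, p (s j)}
      = ⋂ j ∈ Set.Iic k, (fun s : ℕ → ℤ => s j) ⁻¹' {x | p x} := by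
    ext s; simp [Set.mem_Iic]
  rw [h]
  exact MeasurableSet.biInter (Set.to_countable _)
    (fun j _ => (measurable_pi_apply j) .of_discrete)

lemma measurable_reflect (a : ℤ) : Measurable (reflect a) := by
  rw [measurable_pi_iff]
  intro n
  apply Finset.measurable_sum
  intro k _
  exact Measurable.ite (measurableSet_cond (fun x => x ≠ a) k)
    ((measurable_pi_apply (k + 1)).sub (measurable_pi_apply k))
    ((measurable_pi_apply k).sub (measurable_pi_apply (k + 1)))

lemma measurable_exitReflect (a : ℤ) : Measurable (exitReflect a) := by
  rw [measurable_pi_iff]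
  intro n
  apply Finset.measurable_sum
  intro k _
  exact Measurable.ite (measurableSet_cond (fun x => |x| ≠ a) k)
    ((measurable_pi_apply (k + 1)).sub (measurable_pi_apply k))
    ((measurable_pi_apply k).sub (measurable_pi_apply (k + 1)))

lemma measurableSet_Pa : MeasurableSet Pa := by
  have h : Pa = ⋂ n, (((fun s : ℕ → ℤ => s n) ⁻¹' {-1})ᶜ
      ∪ ⋃ m ∈ Set.Iio n, (fun s : ℕ → ℤ => s m) ⁻¹' {1}) := by
    ext s
    simp [Pa, or_iff_not_imp_left]
  rw [h]
  exact MeasurableSet.iInter fun n =>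
    (((measurable_pi_apply n) .of_discrete).compl.union
      (MeasurableSet.biUnion (Set.to_countable _)
        (fun m _ => (measurable_pi_apply m) .of_discrete)))

lemma reflect_zero {s : ℕ → ℤ} (h0 : s 0 = 0) : reflect 0 s = fun n => -s n := by
  funext n
  unfold reflect
  have h : ∀ k ∈ Finset.range n,
      (if ∀ j ≤ k, s j ≠ (0 : ℤ) then s (k + 1) - s k else s k - s (k + 1))
        = s k - s (k + 1) := by
    intro k _
    rw [if_neg]
    push_neg
    exact ⟨0, Nat.zero_le k, h0⟩
  rw [Finset.sum_congr rfl h, Finset.sum_range_sub' s, h0, zero_sub]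

lemma exitReflect_zero {s : ℕ → ℤ} (h0 : s 0 = 0) : exitReflect 0 s = fun n => -s n := by
  funext n
  unfold exitReflect
  have h : ∀ k ∈ Finset.range n,
      (if ∀ j ≤ k, |s j| ≠ (0 : ℤ) then s (k + 1) - s k else s k - s (k + 1))
        = s k - s (k + 1) := by
    intro k _
    rw [if_neg]
    push_neg
    exact ⟨0, Nat.zero_le k, by rw [h0]; rfl⟩
  rw [Finset.sum_congr rfl h, Finset.sum_range_sub' s, h0, zero_sub]

lemma exitReflect_one_of_mem {s : ℕ → ℤ} (h : s ∈ Pa) : exitReflect 1 s = reflect 1 s := by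
  funext n
  unfold exitReflect reflect
  refine Finset.sum_congr rfl fun k _ => ?_
  congr 1
  refine propext ⟨fun hc j hj he => hc j hj (by rw [he]; rfl), fun hc j hj habs => ?_⟩
  rcases (abs_eq (by norm_num : (0:ℤ) ≤ 1)).mp habs with h1 | h1
  · exact hc j hj h1
  · obtain ⟨m, hm, hm1⟩ := h j h1
    exact hc m (le_trans hm.le hj) hm1

lemma exitReflect_one_of_not_mem {s : ℕ → ℤ} (h : s ∉ Pa) :
    exitReflect 1 s = reflect (-1) s := by
  obtain ⟨n, hn, hfirst⟩ := not_mem_Pa.mp h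
  funext m
  unfold exitReflect reflect
  refine Finset.sum_congr rfl fun k _ => ?_
  congr 1
  refine propext ⟨fun hc j hj he => hc j hj (by rw [he]; rfl), fun hc j hj habs => ?_⟩
  rcases (abs_eq (by norm_num : (0:ℤ) ≤ 1)).mp habs with h1 | h1
  · have hnj : n ≤ j := by
      by_contra hlt
      exact hfirst j (Nat.lt_of_not_le hlt) h1
    exact hc n (le_trans hnj hj) hn
  · exact hc j hj h1

lemma reflect_neg_one (s : ℕ → ℤ) :
    reflect (-1) s = fun n => -(reflect 1 (fun m => -s m) n) := by
  funext n
  unfold reflect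
  rw [← Finset.sum_neg_distrib]
  refine Finset.sum_congr rfl fun k _ => ?_
  have hcond : (∀ j ≤ k, -s j ≠ (1 : ℤ)) ↔ (∀ j ≤ k, s j ≠ (-1 : ℤ)) := by
    constructor <;> intro h j hj he <;> exact h j hj (by omega)
  by_cases hc : ∀ j ≤ k, s j ≠ (-1 : ℤ)
  · rw [if_pos hc, if_pos (hcond.mpr hc)]
    ring
  · rw [if_neg hc, if_neg (fun hx => hc (hcond.mp hx))]
    ring

lemma reflect_eq_of_lt {s : ℕ → ℤ} (h0 : s 0 = 0) (a : ℤ) (n : ℕ)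
    (h : ∀ j < n, s j ≠ a) : reflect a s n = s n := by
  unfold reflect
  have hh : ∀ k ∈ Finset.range n,
      (if ∀ j ≤ k, s j ≠ a then s (k + 1) - s k else s k - s (k + 1))
        = s (k + 1) - s k := by
    intro k hk
    rw [Finset.mem_range] at hk
    exact if_pos fun j hj => h j (lt_of_le_of_lt hj hk)
  rw [Finset.sum_congr rfl hh, Finset.sum_range_sub s, h0, sub_zero]

lemma mem_Pa_iff_reflect_one {s : ℕ → ℤ} (h0 : s 0 = 0) :
    s ∈ Pa ↔ reflect 1 s ∈ Pa := by
  constructor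
  · intro hs n hn
    by_cases hone : ∀ j < n, s j ≠ 1
    · rw [reflect_eq_of_lt h0 1 n hone] at hn
      obtain ⟨m, hm, hm1⟩ := hs n hn
      exact absurd hm1 (hone m hm)
    · push_neg at hone
      obtain ⟨j, hjn, hj1⟩ := hone
      have hex : ∃ m, s m = 1 := ⟨j, hj1⟩
      refine ⟨Nat.find hex, lt_of_le_of_lt (Nat.find_min' hex hj1) hjn, ?_⟩
      rw [reflect_eq_of_lt h0 1 _ (fun i hi => Nat.find_min hex hi)]
      exact Nat.find_spec hex
  · intro hr
    by_contra hs
    obtain ⟨n, hn, hfirst⟩ := not_mem_Pa.mp hs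
    have h1 : reflect 1 s n = s n := reflect_eq_of_lt h0 1 n hfirst
    obtain ⟨m, hm, hm1⟩ := hr n (by rw [h1]; exact hn)
    rw [reflect_eq_of_lt h0 1 m (fun i hi => hfirst i (hi.trans hm))] at hm1
    exact hfirst m hm hm1

lemma mem_Pa_iff_reflect_neg_one {s : ℕ → ℤ} (h0 : s 0 = 0) :
    s ∈ Pa ↔ reflect (-1) s ∈ Pa := by
  constructor
  · intro hs n hn
    by_cases hA : ∀ j < n, s j ≠ -1
    · rw [reflect_eq_of_lt h0 (-1) n hA] at hn
      obtain ⟨m, hm, hm1⟩ := hs n hn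
      refine ⟨m, hm, ?_⟩
      rw [reflect_eq_of_lt h0 (-1) m (fun i hi => hA i (hi.trans hm))]
      exact hm1
    · push_neg at hA
      obtain ⟨j, hjn, hj⟩ := hA
      have hex : ∃ i, s i = -1 := ⟨j, hj⟩
      obtain ⟨m, hm, hm1⟩ := hs (Nat.find hex) (Nat.find_spec hex)
      refine ⟨m, (hm.trans_le (Nat.find_min' hex hj)).trans hjn, ?_⟩
      rw [reflect_eq_of_lt h0 (-1) m (fun i hi => Nat.find_min hex (hi.trans hm))]
      exact hm1
  · intro hr
    by_contra hs
    obtain ⟨n, hn, hfirst⟩ := not_mem_Pa.mp hs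
    have hex : ∃ i, s i = -1 := ⟨n, hn⟩
    have hn0n : Nat.find hex ≤ n := Nat.find_min' hex hn
    have hA : ∀ j < Nat.find hex, s j ≠ -1 := fun j hj => Nat.find_min hex hj
    have h1 : reflect (-1) s (Nat.find hex) = s (Nat.find hex) :=
      reflect_eq_of_lt h0 (-1) _ hA
    obtain ⟨m, hm, hm1⟩ := hr (Nat.find hex) (by rw [h1]; exact Nat.find_spec hex)
    rw [reflect_eq_of_lt h0 (-1) m (fun i hi => hA i (hi.trans hm))] at hm1
    exact hfirst m (lt_of_lt_of_le hm hn0n) hm1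

end ExitReflectAux

open ExitReflectAux in

/-- **First step in the proof of Lemma 2.** If a skip free process `M` satisfies
`Θ^a(M) ≐ M` for `a = 0` and `a = 1`, then also `Ψ^a(M) ≐ M` for `a = 0` and `a = 1`. -/
theorem exitReflect_law_eq
    {Ω : Type*} [MeasurableSpace Ω] (P : Measure Ω) [IsProbabilityMeasure P]
    (M : ℕ → Ω → ℤ) (hmeas : ∀ n, Measurable (M n))
    (hskip : ∀ ω, SkipFreePath (fun n => M n ω))
    (hrefl : ∀ a : ℤ, a = 0 ∨ a = 1 →
      Measure.map (fun ω => reflect a (fun n => M n ω)) P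
        = Measure.map (fun ω => (fun n => M n ω)) P) :
    ∀ a : ℤ, a = 0 ∨ a = 1 →
      Measure.map (fun ω => exitReflect a (fun n => M n ω)) P
        = Measure.map (fun ω => (fun n => M n ω)) P := by
  intro a ha
  have hM : Measurable fun ω => (fun n => M n ω) := measurable_pi_lambda _ hmeas
  have h0 : ∀ ω, M 0 ω = 0 := fun ω => (hskip ω).1
  rcases ha with rfl | rfl
  · have heq : (fun ω => exitReflect 0 (fun n => M n ω))
        = fun ω => reflect 0 (fun n => M n ω) := by
      funext ω
      rw [exitReflect_zero (h0 ω), reflect_zero (h0 ω)]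
    rw [heq]
    exact hrefl 0 (Or.inl rfl)
  · -- auxiliary law identities
    have hnegmeas : Measurable (fun s : ℕ → ℤ => fun n => -s n) :=
      measurable_pi_lambda _ (fun n => (measurable_pi_apply n).neg)
    have hmapM := hrefl 1 (Or.inr rfl)
    have hnegM : Measurable (fun ω => (fun n => -M n ω)) :=
      measurable_pi_lambda _ (fun n => (hmeas n).neg)
    have hmapneg : Measure.map (fun ω => (fun n => -M n ω)) P
        = Measure.map (fun ω => (fun n => M n ω)) P := by
      have h : (fun ω => (fun n => -M n ω)) = fun ω => reflect 0 (fun n => M n ω) := by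
        funext ω
        rw [reflect_zero (h0 ω)]
      rw [h]
      exact hrefl 0 (Or.inl rfl)
    have hmapR1N : Measure.map (fun ω => reflect 1 (fun n => -M n ω)) P
        = Measure.map (fun ω => (fun n => M n ω)) P := by
      have h : (fun ω => reflect 1 (fun n => -M n ω))
          = (reflect 1) ∘ (fun ω => (fun n => -M n ω)) := rfl
      rw [h, ← Measure.map_map (measurable_reflect 1) hnegM, hmapneg,
        Measure.map_map (measurable_reflect 1) hM]
      exact hmapM
    have hmapGm : Measure.map (fun ω => reflect (-1) (fun n => M n ω)) P
        = Measure.map (fun ω => (fun n => M n ω)) P := by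
      have h : (fun ω => reflect (-1) (fun n => M n ω))
          = (fun s : ℕ → ℤ => fun n => -s n) ∘ (fun ω => reflect 1 (fun n => -M n ω)) := by
        funext ω
        exact reflect_neg_one (fun n => M n ω)
      have hR1Nm : Measurable (fun ω => reflect 1 (fun n => -M n ω)) :=
        (measurable_reflect 1).comp hnegM
      rw [h, ← Measure.map_map hnegmeas hR1Nm, hmapR1N,
        Measure.map_map hnegmeas hM]
      exact hmapneg
    -- main argument
    have hExM : Measurable fun ω => exitReflect 1 (fun n => M n ω) :=
      (measurable_exitReflect 1).comp hM
    have hR1M : Measurable fun ω => reflect 1 (fun n => M n ω) :=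
      (measurable_reflect 1).comp hM
    have hRmM : Measurable fun ω => reflect (-1) (fun n => M n ω) :=
      (measurable_reflect (-1)).comp hM
    refine Measure.ext fun E hE => ?_
    rw [Measure.map_apply hExM hE, Measure.map_apply hM hE]
    set U : Set Ω := (fun ω => (fun n => M n ω)) ⁻¹' Pa with hU
    have hUm : MeasurableSet U := hM measurableSet_Pa
    have hsplit : (fun ω => exitReflect 1 (fun n => M n ω)) ⁻¹' E
        = (U ∩ (fun ω => reflect 1 (fun n => M n ω)) ⁻¹' E)
          ∪ (Uᶜ ∩ (fun ω => reflect (-1) (fun n => M n ω)) ⁻¹' E) := by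
      ext ω
      by_cases hω : (fun n => M n ω) ∈ Pa
      · simp [Set.mem_preimage, hU, hω, exitReflect_one_of_mem hω]
      · simp [Set.mem_preimage, hU, hω, exitReflect_one_of_not_mem hω]
    rw [hsplit]
    have hdisj : Disjoint (U ∩ (fun ω => reflect 1 (fun n => M n ω)) ⁻¹' E)
        (Uᶜ ∩ (fun ω => reflect (-1) (fun n => M n ω)) ⁻¹' E) :=
      (disjoint_compl_right.mono Set.inter_subset_left Set.inter_subset_left)
    rw [measure_union hdisj (hUm.compl.inter (hRmM hE))]
    have h1 : U ∩ (fun ω => reflect 1 (fun n => M n ω)) ⁻¹' E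
        = (fun ω => reflect 1 (fun n => M n ω)) ⁻¹' (Pa ∩ E) := by
      ext ω
      simp only [Set.mem_inter_iff, Set.mem_preimage, hU]
      exact and_congr_left fun _ => mem_Pa_iff_reflect_one (h0 ω)
    have h2 : Uᶜ ∩ (fun ω => reflect (-1) (fun n => M n ω)) ⁻¹' E
        = (fun ω => reflect (-1) (fun n => M n ω)) ⁻¹' (Paᶜ ∩ E) := by
      ext ω
      simp only [Set.mem_compl_iff, Set.mem_inter_iff, Set.mem_preimage, hU]
      exact and_congr_left fun _ => not_congr (mem_Pa_iff_reflect_neg_one (h0 ω))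
    rw [h1, h2, ← Measure.map_apply hR1M (measurableSet_Pa.inter hE),
      ← Measure.map_apply hRmM (measurableSet_Pa.compl.inter hE), hmapM, hmapGm,
      Measure.map_apply hM (measurableSet_Pa.inter hE),
      Measure.map_apply hM (measurableSet_Pa.compl.inter hE)]
    rw [Set.preimage_inter, Set.preimage_inter, Set.preimage_compl]
    rw [Set.inter_comm, ← Set.diff_eq_compl_inter]
    exact measure_inter_add_diff _ hUm
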